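/- Perturbed semimeasure lemma: let g, q : 2^{<ℕ} → [0,∞) with ∑_{τ∈2^{<ℕ}} q(τ) < ∞, and suppose that g(τ⌢0) + g(τ⌢1) ≤ g(τ) + q(τ) for all finite binary strings τ. Define m(τ) = g(τ) + ∑_{ρ ⪰ τ} q(ρ), the sum ranging over all extensions ρ of τ (including τ itself). Then m(τ⌢0) + m(τ⌢1) ≤ m(τ) for all τ, i.e., m is a continuous semimeasure. -/

import Mathlib

/-- Perturbed semimeasure lemma: adding the tail-sums of `q` to `g` yields a
continuous semimeasure `m(τ) = g(τ) + ∑_{ρ ⪰ τ} q(ρ)`. -/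
theorem stmt_3 (g q : List Bool → ℝ) (hg : ∀ τ, 0 ≤ g τ) (hq : ∀ τ, 0 ≤ q τ)
    (hsum : Summable q)
    (h : ∀ τ, g (τ ++ [false]) + g (τ ++ [true]) ≤ g τ + q τ) :
    ∀ τ : List Bool,
      (g (τ ++ [false]) + ∑' ρ : {ρ : List Bool // (τ ++ [false]) <+: ρ}, q ρ) +
        (g (τ ++ [true]) + ∑' ρ : {ρ : List Bool // (τ ++ [true]) <+: ρ}, q ρ) ≤
      g τ + ∑' ρ : {ρ : List Bool // τ <+: ρ}, q ρ := by
  intro τ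
  have hset : {ρ : List Bool | τ <+: ρ}
      = {τ} ∪ ({ρ | (τ ++ [false]) <+: ρ} ∪ {ρ | (τ ++ [true]) <+: ρ}) := by
    ext ρ
    simp only [Set.mem_setOf_eq, Set.mem_union, Set.mem_singleton_iff]
    constructor
    · rintro ⟨s, rfl⟩
      match s with
      | [] => left; simp
      | false :: t => right; left; exact ⟨t, by simp⟩
      | true :: t => right; right; exact ⟨t, by simp⟩
    · rintro (rfl | h | h)
      · exact List.prefix_refl _
      · exact (List.prefix_append _ _).trans h
      · exact (List.prefix_append _ _).trans h
  have d2 : Disjoint {ρ : List Bool | (τ ++ [false]) <+: ρ}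
      {ρ : List Bool | (τ ++ [true]) <+: ρ} := by
    rw [Set.disjoint_left]
    rintro ρ h1 h2
    have := List.prefix_of_prefix_length_le h1 h2 (by simp)
    have heq : τ ++ [false] = τ ++ [true] := this.eq_of_length (by simp)
    simp at heq
  have d1 : Disjoint ({τ} : Set (List Bool))
      ({ρ | (τ ++ [false]) <+: ρ} ∪ {ρ | (τ ++ [true]) <+: ρ}) := by
    rw [Set.disjoint_left]
    rintro ρ rfl (h1 | h1) <;>
      · have := h1.length_le
        simp at this
  have key : (∑' ρ : {ρ : List Bool // τ <+: ρ}, q ρ)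
      = q τ + ((∑' ρ : {ρ : List Bool // (τ ++ [false]) <+: ρ}, q ρ)
        + (∑' ρ : {ρ : List Bool // (τ ++ [true]) <+: ρ}, q ρ)) := by
    calc (∑' ρ : ({ρ : List Bool | τ <+: ρ} : Set (List Bool)), q ρ)
        = ∑' ρ : (({τ} ∪ ({ρ | (τ ++ [false]) <+: ρ} ∪ {ρ | (τ ++ [true]) <+: ρ}) : Set (List Bool))), q ρ := by
          rw [hset]
      _ = (∑' ρ : ({τ} : Set (List Bool)), q ρ)
          + ∑' ρ : (({ρ | (τ ++ [false]) <+: ρ} ∪ {ρ | (τ ++ [true]) <+: ρ} : Set (List Bool))), q ρ := by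
          exact Summable.tsum_union_disjoint d1 (hsum.subtype _) (hsum.subtype _)
      _ = q τ + ((∑' ρ : {ρ : List Bool // (τ ++ [false]) <+: ρ}, q ρ)
          + (∑' ρ : {ρ : List Bool // (τ ++ [true]) <+: ρ}, q ρ)) := by
          rw [Summable.tsum_union_disjoint d2 (hsum.subtype _) (hsum.subtype _), tsum_singleton]
          rfl
  rw [key]
  linarith [h τ]
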